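/- For the unweighted step-set S = {(1,1),(1,0),(−1,0),(−1,−1)} (all weights 1), the birational transformations φ₁(x,y) = (1/(xy), y) and φ₂(x,y) = (x, 1/(x²y)) are involutions and the group ⟨φ₁, φ₂⟩ has order 8, i.e. (φ₁φ₂)⁴ = id and (φ₁φ₂)² ≠ id. -/

import Mathlib

/-- For the unweighted step-set `{(1,1),(1,0),(−1,0),(−1,−1)}`, the
maps `φ₁(x,y) = (1/(xy), y)` and `φ₂(x,y) = (x, 1/(x²y))` are involutions on nonzero
pairs, and `⟨φ₁, φ₂⟩` has order 8: `(φ₁φ₂)⁴ = id` and `(φ₁φ₂)² ≠ id`. -/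
theorem stmt13 :
    let φ₁ : ℚ × ℚ → ℚ × ℚ := fun p => (1 / (p.1 * p.2), p.2)
    let φ₂ : ℚ × ℚ → ℚ × ℚ := fun p => (p.1, 1 / (p.1 ^ 2 * p.2))
    let g : ℚ × ℚ → ℚ × ℚ := φ₁ ∘ φ₂
    (∀ p : ℚ × ℚ, p.1 ≠ 0 → p.2 ≠ 0 → φ₁ (φ₁ p) = p) ∧
    (∀ p : ℚ × ℚ, p.1 ≠ 0 → p.2 ≠ 0 → φ₂ (φ₂ p) = p) ∧
    (∀ p : ℚ × ℚ, p.1 ≠ 0 → p.2 ≠ 0 → g^[4] p = p) ∧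
    (∃ p : ℚ × ℚ, p.1 ≠ 0 ∧ p.2 ≠ 0 ∧ g^[2] p ≠ p) := by
  intro φ₁ φ₂ g
  refine ⟨?_, ?_, ?_, ⟨(2, 3), by norm_num, by norm_num, by
    simp only [g, φ₁, φ₂, Function.iterate_succ, Function.iterate_zero,
      Function.comp_apply, id_eq]
    norm_num⟩⟩
  · rintro ⟨x, y⟩ hx hy
    simp only [φ₁, Prod.mk.injEq]
    field_simp
    exact ⟨trivial, trivial⟩
  · rintro ⟨x, y⟩ hx hy
    simp only [φ₂, Prod.mk.injEq]
    field_simp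
    exact ⟨trivial, trivial⟩
  · rintro ⟨x, y⟩ hx hy
    simp only [g, φ₁, φ₂, Function.iterate_succ, Function.iterate_zero,
      Function.comp_apply, id_eq, Prod.mk.injEq]
    constructor <;> field_simp <;> ring
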